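/- A differentiable function f is L-smooth relative to a differentiable convex function φ on a convex set C (i.e., D_f(x,y) ≤ L·D_φ(x,y) for all x ∈ C, y ∈ int C) if and only if Lφ − f is convex on C. -/

import Mathlib

open scoped RealInnerProductSpace

noncomputable def breg {n : ℕ} (h : EuclideanSpace ℝ (Fin n) → ℝ)
    (h' : EuclideanSpace ℝ (Fin n) → EuclideanSpace ℝ (Fin n))
    (x y : EuclideanSpace ℝ (Fin n)) : ℝ :=
  h x - h y - ⟪h' y, x - y⟫

section aux

variable {n : ℕ}

local notation "E" => EuclideanSpace ℝ (Fin n)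

/-- Subgradient inequality from convexity. -/
lemma aux_subgrad_of_convexOn {C : Set E} {g : E → ℝ} {G x y : E}
    (hg : ConvexOn ℝ C g) (hx : x ∈ C) (hy : y ∈ C) (hG : HasGradientAt g G y) :
    g y + ⟪G, x - y⟫ ≤ g x := by
  set c : ℝ → E := fun t => y + t • (x - y) with hc
  have hcd : HasDerivAt c (x - y) 0 := by
    rw [hc]; simpa using (((hasDerivAt_id (0:ℝ)).smul_const (x - y)).const_add y)
  have hc0 : c 0 = y := by simp [hc]
  have hfd : HasFDerivAt g ((InnerProductSpace.toDual ℝ _) G) (c 0) := by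
    rw [hc0]; exact hG.hasFDerivAt
  have hψ : HasDerivAt (g ∘ c) (⟪G, x - y⟫) 0 := hfd.comp_hasDerivAt 0 hcd
  have hslope : Filter.Tendsto (slope (g ∘ c) 0) (nhdsWithin 0 (Set.Ioi 0))
      (nhds ⟪G, x - y⟫) := by
    have := hasDerivAt_iff_tendsto_slope.1 hψ
    exact this.mono_left (nhdsWithin_mono _ (fun t ht => by
      simp only [Set.mem_compl_iff, Set.mem_singleton_iff]
      exact ne_of_gt ht))
  have hbound : ∀ᶠ t in nhdsWithin (0:ℝ) (Set.Ioi 0),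
      slope (g ∘ c) 0 t ≤ g x - g y := by
    filter_upwards [Ioo_mem_nhdsGT_of_mem (by constructor <;> norm_num :
        (0:ℝ) ∈ Set.Ico (0:ℝ) 1)] with t ht
    have h1 : c t = (1 - t) • y + t • x := by
      simp only [hc]; module
    have h2 : g (c t) ≤ (1 - t) * g y + t * g x := by
      rw [h1]
      exact hg.2 hy hx (by linarith [ht.2]) (le_of_lt ht.1) (by ring)
    rw [slope_def_field]
    simp only [Function.comp, hc0, sub_zero]
    rw [div_le_iff₀ ht.1]
    nlinarith [ht.1]
  have := le_of_tendsto hslope hbound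
  linarith

/-- Convexity from the subgradient inequality at interior points. -/
lemma aux_convexOn_of_subgrad {C U : Set E} (hC : Convex ℝ C)
    (hCint : (interior C).Nonempty) (hU : IsOpen U) (hCU : C ⊆ U)
    {g : E → ℝ} {g' : E → E} (hg : ∀ x ∈ U, HasGradientAt g (g' x) x)
    (h : ∀ x ∈ C, ∀ y ∈ interior C, g y + ⟪g' y, x - y⟫ ≤ g x) :
    ConvexOn ℝ C g := by
  obtain ⟨w, hw⟩ := hCint
  refine ⟨hC, ?_⟩
  intro x hx y hy a b ha hb hab
  rcases eq_or_lt_of_le ha with ha0 | ha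
  · subst ha0; simp at hab; subst hab; simp
  rcases eq_or_lt_of_le hb with hb0 | hb
  · subst hb0; simp at hab; subst hab; simp
  set z : E := a • x + b • y with hz
  have hzC : z ∈ C := hC hx hy ha.le hb.le hab
  have hcont : ∀ p ∈ C, ContinuousAt g p := fun p hp =>
    (hg p (hCU hp)).differentiableAt.continuousAt
  -- the homotheties toward w
  set Φ : E → ℝ → E := fun p s => (1 - s) • p + s • w with hΦ
  have hΦmem : ∀ p ∈ C, ∀ s ∈ Set.Ioo (0:ℝ) 1, Φ p s ∈ interior C := by
    intro p hp s hs
    exact hC.combo_self_interior_mem_interior hp hw (by linarith [hs.2]) hs.1 (by ring)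
  have hΦcont : ∀ p : E, ContinuousAt (Φ p) 0 := fun p =>
    Continuous.continuousAt (by simp only [hΦ]; fun_prop)
  have hΦ0 : ∀ p : E, Φ p 0 = p := by intro p; simp [hΦ]
  -- key inequality for s ∈ (0,1)
  have key : ∀ s ∈ Set.Ioo (0:ℝ) 1,
      g (Φ z s) ≤ a * g (Φ x s) + b * g (Φ y s) := by
    intro s hs
    have hzs : Φ z s ∈ interior C := hΦmem z hzC s hs
    have hxs : Φ x s ∈ C := interior_subset (hΦmem x hx s hs)
    have hys : Φ y s ∈ C := interior_subset (hΦmem y hy s hs)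
    have h1 := h _ hxs _ hzs
    have h2 := h _ hys _ hzs
    have hcombo : a • (Φ x s - Φ z s) + b • (Φ y s - Φ z s) = 0 := by
      have hb1 : b = 1 - a := by linarith
      simp only [hΦ, hz, hb1]; module
    have hinner : a * ⟪g' (Φ z s), Φ x s - Φ z s⟫
        + b * ⟪g' (Φ z s), Φ y s - Φ z s⟫ = 0 := by
      have : ⟪g' (Φ z s), a • (Φ x s - Φ z s) + b • (Φ y s - Φ z s)⟫ = 0 := by
        rw [hcombo, inner_zero_right]
      rwa [inner_add_right, real_inner_smul_right, real_inner_smul_right] at this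
    have hsum : a * g (Φ z s) + b * g (Φ z s) = g (Φ z s) := by
      rw [← add_mul, hab, one_mul]
    nlinarith [mul_le_mul_of_nonneg_left h1 ha.le, mul_le_mul_of_nonneg_left h2 hb.le]
  -- pass to the limit s → 0⁺
  set F : ℝ → ℝ := fun s => a * g (Φ x s) + b * g (Φ y s) - g (Φ z s) with hF
  have hFc : ContinuousAt F 0 := by
    have cgx : ContinuousAt g (Φ x 0) := by rw [hΦ0]; exact hcont x hx
    have cgy : ContinuousAt g (Φ y 0) := by rw [hΦ0]; exact hcont y hy
    have cgz : ContinuousAt g (Φ z 0) := by rw [hΦ0]; exact hcont z hzC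
    have cx : ContinuousAt (fun s => g (Φ x s)) 0 := cgx.comp (hΦcont x)
    have cy : ContinuousAt (fun s => g (Φ y s)) 0 := cgy.comp (hΦcont y)
    have cz : ContinuousAt (fun s => g (Φ z s)) 0 := cgz.comp (hΦcont z)
    exact ((cx.const_smul a).add (cy.const_smul b)).sub cz
  have hlim : Filter.Tendsto F (nhdsWithin 0 (Set.Ioi 0)) (nhds (F 0)) :=
    hFc.continuousWithinAt.tendsto
  have hFpos : ∀ᶠ s in nhdsWithin (0:ℝ) (Set.Ioi 0), (0:ℝ) ≤ F s := by
    filter_upwards [Ioo_mem_nhdsGT_of_mem (by constructor <;> norm_num :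
        (0:ℝ) ∈ Set.Ico (0:ℝ) 1)] with s hs
    have := key s hs
    simp only [hF]; linarith
  have h0 : (0:ℝ) ≤ F 0 := ge_of_tendsto hlim hFpos
  simp only [hF, hΦ0] at h0
  simp only [smul_eq_mul]
  linarith

end aux

theorem rel_smooth_iff_convex_diff {n : ℕ}
    (C U : Set (EuclideanSpace ℝ (Fin n))) (hC : Convex ℝ C)
    (hCint : (interior C).Nonempty)
    (hU : IsOpen U) (hCU : C ⊆ U)
    (f φ : EuclideanSpace ℝ (Fin n) → ℝ)
    (f' φ' : EuclideanSpace ℝ (Fin n) → EuclideanSpace ℝ (Fin n))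
    (hf : ∀ x ∈ U, HasGradientAt f (f' x) x)
    (hφ : ∀ x ∈ U, HasGradientAt φ (φ' x) x)
    (hφc : ConvexOn ℝ C φ)
    (L : ℝ) (hL : 0 < L) :
    (∀ x ∈ C, ∀ y ∈ interior C, breg f f' x y ≤ L * breg φ φ' x y) ↔
      ConvexOn ℝ C (fun x => L * φ x - f x) := by
  set g : EuclideanSpace ℝ (Fin n) → ℝ := fun x => L * φ x - f x with hgdef
  set g' : EuclideanSpace ℝ (Fin n) → EuclideanSpace ℝ (Fin n) :=
    fun x => L • φ' x - f' x with hg'def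
  have hg : ∀ x ∈ U, HasGradientAt g (g' x) x := by
    intro x hx
    rw [hasGradientAt_iff_hasFDerivAt]
    have h1 := ((hφ x hx).hasFDerivAt.const_smul L).sub (hf x hx).hasFDerivAt
    have heq : (InnerProductSpace.toDual ℝ _) (g' x)
        = L • (InnerProductSpace.toDual ℝ _) (φ' x)
          - (InnerProductSpace.toDual ℝ _) (f' x) := by
      simp only [hg'def]; rw [map_sub, map_smul]
    rw [heq]
    exact h1
  have hequiv : ∀ x y : EuclideanSpace ℝ (Fin n),
      (breg f f' x y ≤ L * breg φ φ' x y ↔ g y + ⟪g' y, x - y⟫ ≤ g x) := by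
    intro x y
    have hi : ⟪g' y, x - y⟫ = L * ⟪φ' y, x - y⟫ - ⟪f' y, x - y⟫ := by
      simp only [hg'def, inner_sub_left, real_inner_smul_left]
    simp only [breg, hgdef, hi]
    constructor <;> intro h <;> linarith
  constructor
  · intro h
    refine aux_convexOn_of_subgrad hC hCint hU hCU hg ?_
    intro x hx y hy
    exact (hequiv x y).1 (h x hx y hy)
  · intro h x hx y hy
    exact (hequiv x y).2
      (aux_subgrad_of_convexOn h hx (interior_subset hy) (hg y (hCU (interior_subset hy))))
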